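/- Let N > 4 be even, K > 0, and let m be an integer with |2m − 1| ≤ (N − 2)/2; set θ̂ = (2m − 1)π/(N − 2) and define the region I = { θ ∈ ℝ^N : θ_i ∈ [θ̂, π − θ̂] for all i and Σ_{i=1}^N θ_i = 2πm }. Then I is positively invariant for the gradient flow θ̇_i = −2K·sin θ_i + K·sin θ_{i−1} + K·sin θ_{i+1} (indices mod N): every differentiable solution θ : [0, ∞) → ℝ^N of this system with θ(0) ∈ I satisfies θ(t) ∈ I for all t ≥ 0. -/

import Mathlib

open Real Set Filter Topology

lemma sin_lip (x y : ℝ) : |Real.sin x - Real.sin y| ≤ |x - y| := by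
  rw [Real.sin_sub_sin, abs_mul, abs_mul, abs_two]
  calc (2:ℝ) * |Real.sin ((x - y)/2)| * |Real.cos ((x + y)/2)|
      ≤ 2 * |(x - y)/2| * 1 :=
        mul_le_mul (mul_le_mul le_rfl Real.abs_sin_le_abs (abs_nonneg _) (by norm_num))
          (Real.abs_cos_le_one _) (abs_nonneg _) (by positivity)
    _ = |x - y| := by rw [abs_div, abs_two]; ring

lemma sin_ge_endpoint {a x : ℝ} (ha : -(π/2) ≤ a) (hx1 : a ≤ x) (hx2 : x ≤ π - a) :
    Real.sin a ≤ Real.sin x := by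
  rcases le_total x (π/2) with h | h
  · exact Real.sin_le_sin_of_le_of_le_pi_div_two ha h hx1
  · rw [← Real.sin_pi_sub x]
    exact Real.sin_le_sin_of_le_of_le_pi_div_two ha (by linarith) (by linarith)

lemma hasDerivAt_maxsq (y : ℝ) : HasDerivAt (fun x : ℝ => max x 0 ^ 2) (2 * max y 0) y := by
  rcases lt_trichotomy y 0 with hy | hy | hy
  · have hev : (fun x : ℝ => max x 0 ^ 2) =ᶠ[nhds y] fun _ => (0:ℝ) := by
      filter_upwards [Iio_mem_nhds hy] with x hx
      simp [max_eq_right (le_of_lt (mem_Iio.1 hx))]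
    rw [max_eq_right hy.le, mul_zero]
    exact (hasDerivAt_const y (0:ℝ)).congr_of_eventuallyEq hev
  · subst hy
    rw [max_self, mul_zero]
    rw [hasDerivAt_iff_tendsto_slope]
    have h1 : ∀ᶠ x in 𝓝[≠] (0:ℝ), ‖slope (fun x : ℝ => max x 0 ^ 2) 0 x‖ ≤ ‖x‖ := by
      filter_upwards [self_mem_nhdsWithin] with x hx
      have hx0 : x ≠ 0 := hx
      have hs : slope (fun x : ℝ => max x 0 ^ 2) 0 x = max x 0 ^ 2 / x := by
        simp [slope_def_field]
      rw [hs, Real.norm_eq_abs, Real.norm_eq_abs, abs_div]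
      rw [div_le_iff₀ (abs_pos.2 hx0)]
      have hle : max x 0 ≤ |x| := max_le (le_abs_self x) (abs_nonneg x)
      calc |max x 0 ^ 2| = max x 0 * max x 0 := by
            rw [abs_of_nonneg (by positivity)]; ring
        _ ≤ |x| * |x| := mul_le_mul hle hle (le_max_right x 0) (abs_nonneg x)
    have h2 : Tendsto (fun x : ℝ => ‖x‖) (𝓝[≠] (0:ℝ)) (𝓝 0) := by
      have := (continuous_norm (E := ℝ)).tendsto (0:ℝ)
      simpa using this.mono_left nhdsWithin_le_nhds
    exact squeeze_zero_norm' h1 h2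
  · have hev : (fun x : ℝ => max x 0 ^ 2) =ᶠ[nhds y] fun x => x ^ 2 := by
      filter_upwards [Ioi_mem_nhds hy] with x hx
      simp [max_eq_left (le_of_lt (mem_Ioi.1 hx))]
    rw [max_eq_left hy.le]
    have h := hasDerivAt_pow 2 y
    exact (by simpa [mul_comm] using h :
      HasDerivAt (fun x : ℝ => x ^ 2) (2 * y) y).congr_of_eventuallyEq hev

theorem gradient_flow_invariant_region
    (N : ℕ) [NeZero N] (hN : 4 < N) (hNeven : Even N)
    (K : ℝ) (hK : 0 < K) (m : ℤ)
    (hm : |2 * (m : ℝ) - 1| ≤ ((N : ℝ) - 2) / 2)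
    (θ : ℝ → Fin N → ℝ)
    (hflow : ∀ (i : Fin N), ∀ t ∈ Set.Ici (0 : ℝ),
      HasDerivWithinAt (fun s => θ s i)
        (-2 * K * Real.sin (θ t i) + K * Real.sin (θ t (i - 1)) +
          K * Real.sin (θ t (i + 1))) (Set.Ici (0 : ℝ)) t)
    (h0mem : ∀ i : Fin N,
      θ 0 i ∈ Set.Icc ((2 * (m : ℝ) - 1) * π / ((N : ℝ) - 2))
        (π - (2 * (m : ℝ) - 1) * π / ((N : ℝ) - 2)))
    (h0sum : ∑ i : Fin N, θ 0 i = 2 * π * m) :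
    ∀ t : ℝ, 0 ≤ t →
      (∀ i : Fin N,
        θ t i ∈ Set.Icc ((2 * (m : ℝ) - 1) * π / ((N : ℝ) - 2))
          (π - (2 * (m : ℝ) - 1) * π / ((N : ℝ) - 2))) ∧
      ∑ i : Fin N, θ t i = 2 * π * m := by
  set th : ℝ := (2 * (m : ℝ) - 1) * π / ((N : ℝ) - 2) with hth
  have hN2 : (0:ℝ) < (N:ℝ) - 2 := by
    have h4 : (4:ℝ) < (N:ℝ) := by exact_mod_cast hN
    linarith
  have hNth : ((N : ℝ) - 2) * th = (2 * (m:ℝ) - 1) * π := by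
    rw [hth]; field_simp
  have hth_abs : |th| ≤ π/2 := by
    rw [hth, abs_div, abs_mul, abs_of_pos Real.pi_pos, abs_of_pos hN2,
      div_le_iff₀ hN2]
    calc |2*(m:ℝ)-1| * π ≤ (((N:ℝ)-2)/2) * π :=
          mul_le_mul_of_nonneg_right hm Real.pi_pos.le
      _ = π/2 * ((N:ℝ)-2) := by ring
  have hth_lb : -(π/2) ≤ th := (abs_le.1 hth_abs).1
  have hth_ub : th ≤ π/2 := (abs_le.1 hth_abs).2
  -- sum conservation
  have hsum_deriv : ∀ t ∈ Set.Ici (0:ℝ),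
      HasDerivWithinAt (fun s => ∑ i : Fin N, θ s i) 0 (Set.Ici (0:ℝ)) t := by
    intro t ht
    have h := HasDerivWithinAt.fun_sum (fun i (_ : i ∈ Finset.univ) => hflow i t ht)
    have hd0 : ∑ i : Fin N, (-2 * K * Real.sin (θ t i) + K * Real.sin (θ t (i - 1)) +
        K * Real.sin (θ t (i + 1))) = 0 := by
      have e1 := Fintype.sum_equiv (Equiv.subRight (1 : Fin N))
        (fun i => Real.sin (θ t (i - 1))) (fun i => Real.sin (θ t i)) (fun i => rfl)
      have e2 := Fintype.sum_equiv (Equiv.addRight (1 : Fin N))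
        (fun i => Real.sin (θ t (i + 1))) (fun i => Real.sin (θ t i)) (fun i => rfl)
      rw [Finset.sum_add_distrib, Finset.sum_add_distrib, ← Finset.mul_sum, ← Finset.mul_sum,
        ← Finset.mul_sum, e1, e2]
      ring
    rwa [hd0] at h
  have hS : ∀ t : ℝ, 0 ≤ t → ∑ i : Fin N, θ t i = 2 * π * m := by
    intro t ht
    have := constant_of_has_deriv_right_zero
      (f := fun s => ∑ i : Fin N, θ s i) (a := 0) (b := t)
      (fun x hx => ((hsum_deriv x hx.1).continuousWithinAt).mono Set.Icc_subset_Ici_self)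
      (fun x hx => (hsum_deriv x hx.1).mono (Set.Ici_subset_Ici.2 hx.1))
      t ⟨ht, le_rfl⟩
    exact this.trans h0sum
  -- the Lyapunov function
  set F : ℝ → ℝ := fun s => ∑ i : Fin N, max (th - θ s i) 0 ^ 2 with hF
  set F' : ℝ → ℝ := fun s => ∑ i : Fin N, 2 * max (th - θ s i) 0 *
    -(-2 * K * Real.sin (θ s i) + K * Real.sin (θ s (i - 1)) +
      K * Real.sin (θ s (i + 1))) with hF'
  have hFderiv : ∀ t ∈ Set.Ici (0:ℝ), HasDerivWithinAt F (F' t) (Set.Ici (0:ℝ)) t := by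
    intro t ht
    apply HasDerivWithinAt.fun_sum
    intro i _
    have hinner : HasDerivWithinAt (fun s => th - θ s i)
        (-(-2 * K * Real.sin (θ t i) + K * Real.sin (θ t (i - 1)) +
          K * Real.sin (θ t (i + 1)))) (Set.Ici (0:ℝ)) t :=
      (hflow i t ht).const_sub th
    have := (hasDerivAt_maxsq (th - θ t i)).comp_hasDerivWithinAt t hinner
    simpa [Function.comp_def, mul_assoc] using this
  -- nonnegativity of F
  have hFnonneg : ∀ s : ℝ, 0 ≤ F s := fun s =>
    Finset.sum_nonneg fun i _ => by positivity
  -- F 0 = 0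
  have hF0 : F 0 = 0 := by
    apply Finset.sum_eq_zero
    intro i _
    rw [max_eq_right (by linarith [(h0mem i).1])]
    norm_num
  -- the bound F' ≤ C * F for t ≥ 0
  have hbound : ∀ t : ℝ, 0 ≤ t → F' t ≤ (12 * K * N) * F t := by
    intro t ht
    set U : ℝ := ∑ j : Fin N, max (th - θ t j) 0 with hU
    have hUnonneg : 0 ≤ U := Finset.sum_nonneg fun j _ => le_max_right _ _
    have hUj : ∀ j : Fin N, max (th - θ t j) 0 ≤ U := by
      intro j
      rw [hU]
      exact Finset.single_le_sum (f := fun k => max (th - θ t k) 0)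
        (fun k _ => le_max_right _ _) (Finset.mem_univ j)
    have hcard : ((Finset.univ.erase (0 : Fin N)).card : ℝ) = (N:ℝ) - 1 := by
      rw [Finset.card_erase_of_mem (Finset.mem_univ _), Finset.card_univ, Fintype.card_fin]
      have h1 : (1:ℕ) ≤ N := by omega
      push_cast [Nat.cast_sub h1]
      ring
    have hup : ∀ j : Fin N, θ t j - (π - th) ≤ U := by
      intro j
      have h1 : θ t j + ∑ k ∈ Finset.univ.erase j, θ t k = 2 * π * m := by
        rw [Finset.add_sum_erase _ _ (Finset.mem_univ j)]
        exact hS t ht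
      have h2 : ∑ k ∈ Finset.univ.erase j, (th - θ t k) ≤
          ∑ k ∈ Finset.univ.erase j, max (th - θ t k) 0 :=
        Finset.sum_le_sum fun k _ => le_max_left _ _
      have h3 : ∑ k ∈ Finset.univ.erase j, max (th - θ t k) 0 ≤ U :=
        Finset.sum_le_sum_of_subset_of_nonneg (Finset.subset_univ _)
          (fun k _ _ => le_max_right _ _)
      have hcardj : ((Finset.univ.erase j).card : ℝ) = (N:ℝ) - 1 := by
        rw [Finset.card_erase_of_mem (Finset.mem_univ _), Finset.card_univ, Fintype.card_fin]
        have h1 : (1:ℕ) ≤ N := by omega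
        push_cast [Nat.cast_sub h1]
        ring
      have h4 : ∑ k ∈ Finset.univ.erase j, (th - θ t k) =
          ((N:ℝ) - 1) * th - (2 * π * m - θ t j) := by
        rw [Finset.sum_sub_distrib, Finset.sum_const, nsmul_eq_mul, hcardj]
        have h5 : ∑ k ∈ Finset.univ.erase j, θ t k = 2 * π * m - θ t j := by linarith
        rw [h5]
      have h6 := (h4 ▸ h2).trans h3
      -- ((N-1)th - (2πm - θ_j)) ≤ U  and  (N-2)th = (2m-1)π
      nlinarith [hNth]
    have hsin_lb : ∀ j : Fin N,
        Real.sin th - max (th - θ t j) 0 - U ≤ Real.sin (θ t j) := by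
      intro j
      rcases le_or_gt (θ t j) (π - th) with h | h
      · rcases le_or_gt th (θ t j) with h' | h'
        · have := sin_ge_endpoint hth_lb h' h
          have := le_max_right (th - θ t j) 0
          linarith [le_max_right (th - θ t j) 0]
        · have hl := sin_lip th (θ t j)
          have habs : |th - θ t j| = th - θ t j := abs_of_pos (by linarith)
          have hm' : max (th - θ t j) 0 = th - θ t j := max_eq_left (by linarith)
          rw [habs] at hl
          have := (abs_le.1 hl).2
          linarith
      · have hl := sin_lip (θ t j) (π - th)
        have habs : |θ t j - (π - th)| = θ t j - (π - th) := abs_of_pos (by linarith)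
        rw [habs] at hl
        have h7 := (abs_le.1 hl).1
        have h8 := hup j
        rw [Real.sin_pi_sub] at h7
        linarith [le_max_right (th - θ t j) 0]
    have hterm : ∀ i : Fin N, 2 * max (th - θ t i) 0 *
        -(-2 * K * Real.sin (θ t i) + K * Real.sin (θ t (i - 1)) +
          K * Real.sin (θ t (i + 1))) ≤ 12 * K * max (th - θ t i) 0 * U := by
      intro i
      rcases (le_max_right (th - θ t i) 0).lt_or_eq with hpos | hzero
      · -- θ t i < th
        have hlt : θ t i < th := by
          by_contra hcon
          push_neg at hcon
          rw [max_eq_right (by linarith)] at hpos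
          exact lt_irrefl _ hpos
        have hmx : max (th - θ t i) 0 = th - θ t i := max_eq_left (by linarith)
        have hsini : Real.sin (θ t i) ≤ Real.sin th + max (th - θ t i) 0 := by
          have hl := sin_lip (θ t i) th
          have habs : |θ t i - th| = th - θ t i := by
            rw [abs_sub_comm, abs_of_pos (by linarith)]
          rw [habs] at hl
          have := (abs_le.1 hl).2
          rw [hmx]
          linarith
        have hd : -(-2 * K * Real.sin (θ t i) + K * Real.sin (θ t (i - 1)) +
            K * Real.sin (θ t (i + 1))) ≤ 6 * K * U := by
          have ha := hsin_lb (i - 1)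
          have hb := hsin_lb (i + 1)
          have hua := hUj (i - 1)
          have hub := hUj (i + 1)
          have hui := hUj i
          nlinarith [hK.le]
        have h2u : (0:ℝ) ≤ 2 * max (th - θ t i) 0 := by positivity
        calc 2 * max (th - θ t i) 0 * -(-2 * K * Real.sin (θ t i) +
              K * Real.sin (θ t (i - 1)) + K * Real.sin (θ t (i + 1)))
            ≤ 2 * max (th - θ t i) 0 * (6 * K * U) :=
              mul_le_mul_of_nonneg_left hd h2u
          _ = 12 * K * max (th - θ t i) 0 * U := by ring
      · rw [← hzero]
        simp
    have hsq : U ^ 2 ≤ (N:ℝ) * F t := by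
      have := sq_sum_le_card_mul_sum_sq (s := (Finset.univ : Finset (Fin N)))
        (f := fun j => max (th - θ t j) 0)
      simpa [hF, hU, Finset.card_univ] using this
    calc F' t ≤ ∑ i : Fin N, 12 * K * max (th - θ t i) 0 * U :=
          Finset.sum_le_sum fun i _ => hterm i
      _ = 12 * K * U * U := by
          rw [← Finset.sum_mul, ← Finset.mul_sum, ← hU]
      _ ≤ 12 * K * N * F t := by nlinarith [hK.le, hFnonneg t]
  -- Gronwall: F ≡ 0 on [0, ∞)
  have hFzero : ∀ t : ℝ, 0 ≤ t → F t = 0 := by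
    intro t ht
    have hcont : ContinuousOn F (Set.Icc 0 t) := fun x hx =>
      ((hFderiv x hx.1).continuousWithinAt).mono Set.Icc_subset_Ici_self
    have hgron := le_gronwallBound_of_liminf_deriv_right_le (f := F) (f' := F')
      (δ := 0) (K := 12 * K * N) (ε := 0) (a := 0) (b := t) hcont
      (fun x hx r hr =>
        (((hFderiv x hx.1).mono (Set.Ici_subset_Ici.2 hx.1)).liminf_right_slope_le hr))
      (le_of_eq hF0)
      (fun x hx => by rw [add_zero]; exact hbound x hx.1)
      t ⟨ht, le_rfl⟩
    rw [gronwallBound_ε0_δ0] at hgron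
    exact le_antisymm hgron (hFnonneg t)
  -- conclusion
  intro t ht
  have hlow : ∀ i : Fin N, th ≤ θ t i := by
    intro i
    have h1 : max (th - θ t i) 0 ^ 2 = 0 := by
      have := (Finset.sum_eq_zero_iff_of_nonneg
        (fun j (_ : j ∈ Finset.univ) => by positivity)).1 (hFzero t ht) i (Finset.mem_univ i)
      exact this
    have h2 : max (th - θ t i) 0 = 0 := by
      have := pow_eq_zero_iff (n := 2) (by norm_num) |>.1 h1
      exact this
    have := le_max_left (th - θ t i) 0
    rw [h2] at this
    linarith
  have hsum := hS t ht
  refine ⟨fun i => ⟨hlow i, ?_⟩, hsum⟩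
  -- upper bound from the sum constraint
  have h1 : θ t i + ∑ k ∈ Finset.univ.erase i, θ t k = 2 * π * m := by
    rw [Finset.add_sum_erase _ _ (Finset.mem_univ i)]
    exact hsum
  have hcardi : ((Finset.univ.erase i).card : ℝ) = (N:ℝ) - 1 := by
    rw [Finset.card_erase_of_mem (Finset.mem_univ _), Finset.card_univ, Fintype.card_fin]
    have hn1 : (1:ℕ) ≤ N := by omega
    push_cast [Nat.cast_sub hn1]
    ring
  have h2 : ((Finset.univ.erase i).card : ℝ) * th ≤ ∑ k ∈ Finset.univ.erase i, θ t k := by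
    have := Finset.card_nsmul_le_sum (Finset.univ.erase i) (fun k => θ t k) th
      (fun k _ => hlow k)
    rwa [nsmul_eq_mul] at this
  rw [hcardi] at h2
  nlinarith [hNth]
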